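/- For all real d×d matrices M and N and any real p with 1 < p < 2, the inequality (p−1)|M−N|^2 ≤ ((|M|^{p-2}M − |N|^{p-2}N) : (M−N)) · (|M|^p + |N|^p)^{(2−p)/p} holds, where : denotes the Frobenius inner product and |·| the Frobenius norm. -/
import Mathlib

/-- Frobenius inner product of real `d × d` matrices. -/
def frobInner {d : ℕ} (A B : Matrix (Fin d) (Fin d) ℝ) : ℝ :=
  ∑ i, ∑ j, A i j * B i j

/-- Frobenius norm of a real `d × d` matrix. -/
noncomputable def frobNorm {d : ℕ} (A : Matrix (Fin d) (Fin d) ℝ) : ℝ :=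
  Real.sqrt (frobInner A A)

/-- The power-law map `A ↦ |A|^{p-2} A`, extended by `0` at `A = 0`. -/
noncomputable def powerLaw {d : ℕ} (p : ℝ) (A : Matrix (Fin d) (Fin d) ℝ) :
    Matrix (Fin d) (Fin d) ℝ :=
  if A = 0 then 0 else (frobNorm A) ^ (p - 2) • A

lemma frobInner_self_nonneg {d : ℕ} (A : Matrix (Fin d) (Fin d) ℝ) :
    0 ≤ frobInner A A :=
  Finset.sum_nonneg fun _ _ => Finset.sum_nonneg fun _ _ => mul_self_nonneg _

lemma frobNorm_nonneg {d : ℕ} (A : Matrix (Fin d) (Fin d) ℝ) : 0 ≤ frobNorm A :=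
  Real.sqrt_nonneg _

lemma frobNorm_sq {d : ℕ} (A : Matrix (Fin d) (Fin d) ℝ) :
    frobNorm A ^ 2 = frobInner A A :=
  Real.sq_sqrt (frobInner_self_nonneg A)

lemma frobInner_le {d : ℕ} (A B : Matrix (Fin d) (Fin d) ℝ) :
    frobInner A B ≤ frobNorm A * frobNorm B := by
  simp only [frobNorm, frobInner]
  rw [← Finset.sum_product' (f := fun i j => A i j * B i j),
      ← Finset.sum_product' (f := fun i j => A i j * A i j),
      ← Finset.sum_product' (f := fun i j => B i j * B i j)]
  have := Real.sum_mul_le_sqrt_mul_sqrt (Finset.univ : Finset (Fin d × Fin d))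
    (fun x => A x.1 x.2) (fun x => B x.1 x.2)
  simpa [pow_two] using this

lemma abs_frobInner_le {d : ℕ} (A B : Matrix (Fin d) (Fin d) ℝ) :
    |frobInner A B| ≤ frobNorm A * frobNorm B := by
  rw [abs_le]
  constructor
  · have h := frobInner_le (-A) B
    have h1 : frobInner (-A) B = -frobInner A B := by
      unfold frobInner; simp
    have h2 : frobNorm (-A) = frobNorm A := by
      unfold frobNorm frobInner; simp
    rw [h1, h2] at h
    linarith
  · exact frobInner_le A B

lemma powerLaw_eq {d : ℕ} (p : ℝ) (A : Matrix (Fin d) (Fin d) ℝ) :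
    powerLaw p A = (frobNorm A) ^ (p - 2) • A := by
  unfold powerLaw
  split_ifs with h
  · simp [h]
  · rfl

lemma frobInner_expand {d : ℕ} (a b : ℝ) (M N : Matrix (Fin d) (Fin d) ℝ) :
    frobInner (a • M - b • N) (M - N)
      = a * frobInner M M - (a + b) * frobInner M N + b * frobInner N N := by
  unfold frobInner
  have h : ∀ i j, (a • M - b • N) i j * (M - N) i j
      = a * (M i j * M i j) - (a + b) * (M i j * N i j) + b * (N i j * N i j) := by
    intro i j
    simp [Matrix.sub_apply, Matrix.smul_apply, smul_eq_mul]
    ring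
  simp_rw [h, Finset.sum_add_distrib, Finset.sum_sub_distrib, ← Finset.mul_sum]

lemma frobInner_sub_self {d : ℕ} (M N : Matrix (Fin d) (Fin d) ℝ) :
    frobInner (M - N) (M - N)
      = frobInner M M - 2 * frobInner M N + frobInner N N := by
  have h := frobInner_expand (d := d) 1 1 M N
  simp only [one_smul, one_mul] at h
  rw [h]; ring

/-- `x^(p-2) * x = x^(p-1)` for nonneg `x` (with rpow conventions), `p ≠ 1, 2`. -/
lemma rpow_shift (p x : ℝ) (hp1 : 1 < p) (hp2 : p < 2) (hx : 0 ≤ x) :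
    x ^ (p - 2) * x = x ^ (p - 1) := by
  rcases hx.eq_or_lt with h | h
  · rw [← h, Real.zero_rpow (by linarith), Real.zero_rpow (by linarith), mul_zero]
  · rw [show p - 1 = (p - 2) + 1 by ring, Real.rpow_add_one (ne_of_gt h)]

lemma rpow_comp (p x : ℝ) (hp1 : 1 < p) (hx : 0 < x) :
    x ^ (p - 1) * x ^ (2 - p) = x := by
  rw [← Real.rpow_add hx]
  norm_num

/-- `x^(2-p) ≤ (x^p + y^p)^((2-p)/p)` for `0 ≤ x, y`. -/
lemma rpow_S_lower (p x y : ℝ) (hp1 : 1 < p) (hp2 : p < 2) (hx : 0 ≤ x) (hy : 0 ≤ y) :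
    x ^ (2 - p) ≤ (x ^ p + y ^ p) ^ ((2 - p) / p) := by
  have hp0 : (0:ℝ) < p := by linarith
  have h1 : x ^ (2 - p) = (x ^ p) ^ ((2 - p) / p) := by
    rw [← Real.rpow_mul hx]
    congr 1
    field_simp
  rw [h1]
  exact Real.rpow_le_rpow (Real.rpow_nonneg hx p)
    (le_add_of_nonneg_right (Real.rpow_nonneg hy p))
    (div_nonneg (by linarith) (by linarith))

/-- Endpoint case `c = xy` (ordered version). -/
lemma Eplus (p x y : ℝ) (hp1 : 1 < p) (hp2 : p < 2) (hy : 0 ≤ y) (hxy : y ≤ x) :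
    (p - 1) * (x - y) ^ 2
      ≤ (x ^ (p - 1) - y ^ (p - 1)) * (x - y) * (x ^ p + y ^ p) ^ ((2 - p) / p) := by
  have hx : 0 ≤ x := hy.trans hxy
  rcases hx.eq_or_lt with h0 | h0
  · have hy0 : y = 0 := le_antisymm (h0 ▸ hxy) hy
    subst hy0
    rw [← h0]
    simp
  · have hS := rpow_S_lower p x y hp1 hp2 hx hy
    have hS0 : (0:ℝ) ≤ (x ^ p + y ^ p) ^ ((2 - p) / p) := Real.rpow_nonneg
      (by positivity) _
    have hmono : y ^ (p - 1) ≤ x ^ (p - 1) :=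
      Real.rpow_le_rpow hy hxy (by linarith)
    have hAM : y ^ (p - 1) * x ^ (2 - p) ≤ (p - 1) * y + (2 - p) * x :=
      Real.geom_mean_le_arith_mean2_weighted (by linarith) (by linarith) hy hx (by ring)
    have hid := rpow_comp p x hp1 h0
    have hcore : (p - 1) * (x - y) ≤ (x ^ (p - 1) - y ^ (p - 1)) * x ^ (2 - p) := by
      nlinarith
    have h1 : (0:ℝ) ≤ x - y := by linarith
    have h2 : (0:ℝ) ≤ x ^ (p - 1) - y ^ (p - 1) := by linarith
    have hstep1 := mul_le_mul_of_nonneg_right hcore h1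
    have hstep2 := mul_le_mul_of_nonneg_left hS (mul_nonneg h2 h1)
    nlinarith
/-- Endpoint case `c = -xy` (ordered version). -/
lemma Eminus (p x y : ℝ) (hp1 : 1 < p) (hp2 : p < 2) (hy : 0 ≤ y) (hxy : y ≤ x) :
    (p - 1) * (x + y) ^ 2
      ≤ (x ^ (p - 1) + y ^ (p - 1)) * (x + y) * (x ^ p + y ^ p) ^ ((2 - p) / p) := by
  have hx : 0 ≤ x := hy.trans hxy
  rcases hx.eq_or_lt with h0 | h0
  · have hy0 : y = 0 := le_antisymm (h0 ▸ hxy) hy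
    subst hy0
    rw [← h0]
    simp
  · have hS := rpow_S_lower p x y hp1 hp2 hx hy
    have hS0 : (0:ℝ) ≤ (x ^ p + y ^ p) ^ ((2 - p) / p) := Real.rpow_nonneg
      (by positivity) _
    have hid := rpow_comp p x hp1 h0
    have hyb : y ≤ y ^ (p - 1) * x ^ (2 - p) := by
      rcases hy.eq_or_lt with hy0 | hy0
      · rw [← hy0, Real.zero_rpow (by linarith), zero_mul]
      · have := rpow_comp p y hp1 hy0
        have hm : y ^ (2 - p) ≤ x ^ (2 - p) := Real.rpow_le_rpow hy hxy (by linarith)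
        nlinarith [Real.rpow_nonneg hy (p - 1)]
    have hyp1 : (0:ℝ) ≤ y ^ (p - 1) := Real.rpow_nonneg hy _
    have hxp1 : (0:ℝ) ≤ x ^ (p - 1) := Real.rpow_nonneg hx _
    have hcore : (p - 1) * (x + y) ≤ (x ^ (p - 1) + y ^ (p - 1)) * x ^ (2 - p) := by
      nlinarith
    have h1 : (0:ℝ) ≤ x + y := by linarith
    have h2 : (0:ℝ) ≤ x ^ (p - 1) + y ^ (p - 1) := by linarith
    have hstep1 := mul_le_mul_of_nonneg_right hcore h1
    have hstep2 := mul_le_mul_of_nonneg_left hS (mul_nonneg h2 h1)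
    nlinarith

/-- The key scalar inequality. -/
lemma key_scalar (p x y c : ℝ) (hp1 : 1 < p) (hp2 : p < 2) (hx : 0 ≤ x) (hy : 0 ≤ y)
    (hc : |c| ≤ x * y) :
    (p - 1) * (x ^ 2 + y ^ 2 - 2 * c)
      ≤ (x ^ (p - 2) * x ^ 2 - (x ^ (p - 2) + y ^ (p - 2)) * c + y ^ (p - 2) * y ^ 2)
          * (x ^ p + y ^ p) ^ ((2 - p) / p) := by
  set S := (x ^ p + y ^ p) ^ ((2 - p) / p) with hSdef
  have hax : x ^ (p - 2) * x = x ^ (p - 1) := rpow_shift p x hp1 hp2 hx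
  have hby : y ^ (p - 2) * y = y ^ (p - 1) := rpow_shift p y hp1 hp2 hy
  have P1 : (p - 1) * (x - y) ^ 2 ≤ (x ^ (p - 1) - y ^ (p - 1)) * (x - y) * S := by
    rcases le_total y x with h | h
    · exact Eplus p x y hp1 hp2 hy h
    · have := Eplus p y x hp1 hp2 hx h
      rw [add_comm (y ^ p)] at this
      nlinarith [this]
  have P2 : (p - 1) * (x + y) ^ 2 ≤ (x ^ (p - 1) + y ^ (p - 1)) * (x + y) * S := by
    rcases le_total y x with h | h
    · exact Eminus p x y hp1 hp2 hy h
    · have := Eminus p y x hp1 hp2 hx h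
      rw [add_comm (y ^ p)] at this
      nlinarith [this]
  -- rewrite endpoint inequalities in terms of `x^(p-2)`, `y^(p-2)`
  have e1 : (x ^ (p - 1) - y ^ (p - 1)) * (x - y)
      = x ^ (p - 2) * x ^ 2 + y ^ (p - 2) * y ^ 2 - (x ^ (p - 2) + y ^ (p - 2)) * (x * y) := by
    rw [← hax, ← hby]; ring
  have e2 : (x ^ (p - 1) + y ^ (p - 1)) * (x + y)
      = x ^ (p - 2) * x ^ 2 + y ^ (p - 2) * y ^ 2 + (x ^ (p - 2) + y ^ (p - 2)) * (x * y) := by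
    rw [← hax, ← hby]; ring
  rw [e1] at P1
  rw [e2] at P2
  obtain ⟨hc1, hc2⟩ := abs_le.mp hc
  rcases le_total ((x ^ (p - 2) + y ^ (p - 2)) * S) (2 * (p - 1)) with hv | hv
  · nlinarith [mul_nonneg (by linarith : (0:ℝ) ≤ c + x * y)
      (by linarith : (0:ℝ) ≤ 2 * (p - 1) - (x ^ (p - 2) + y ^ (p - 2)) * S)]
  · nlinarith [mul_nonneg (by linarith : (0:ℝ) ≤ x * y - c)
      (by linarith : (0:ℝ) ≤ (x ^ (p - 2) + y ^ (p - 2)) * S - 2 * (p - 1))]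

theorem powerLaw_strong_monotone_p_lt_two {d : ℕ} (p : ℝ) (hp1 : 1 < p) (hp2 : p < 2)
    (M N : Matrix (Fin d) (Fin d) ℝ) :
    (p - 1) * frobNorm (M - N) ^ (2 : ℝ) ≤
      frobInner (powerLaw p M - powerLaw p N) (M - N) *
        (frobNorm M ^ p + frobNorm N ^ p) ^ ((2 - p) / p) := by
  set x := frobNorm M with hxdef
  set y := frobNorm N with hydef
  set c := frobInner M N with hcdef
  have hx : 0 ≤ x := frobNorm_nonneg M
  have hy : 0 ≤ y := frobNorm_nonneg N
  have hc : |c| ≤ x * y := abs_frobInner_le M N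
  have hMM : frobInner M M = x ^ 2 := (frobNorm_sq M).symm
  have hNN : frobInner N N = y ^ 2 := (frobNorm_sq N).symm
  have hL : frobNorm (M - N) ^ (2 : ℝ) = x ^ 2 + y ^ 2 - 2 * c := by
    rw [show (2:ℝ) = ((2:ℕ):ℝ) by norm_num, Real.rpow_natCast, frobNorm_sq,
      frobInner_sub_self, hMM, hNN, ← hcdef]
    push_cast
    ring
  have hR : frobInner (powerLaw p M - powerLaw p N) (M - N)
      = x ^ (p - 2) * x ^ 2 - (x ^ (p - 2) + y ^ (p - 2)) * c + y ^ (p - 2) * y ^ 2 := by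
    rw [powerLaw_eq, powerLaw_eq, frobInner_expand, hMM, hNN, ← hcdef, ← hxdef, ← hydef]
  rw [hL, hR]
  exact key_scalar p x y c hp1 hp2 hx hy hc
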